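/- Let s ∈ [−1,1]^n with sᵀLs > 0, let 0 < ε < 1/2, and let q ∈ ℝ^n satisfy ‖q − (I + L)^{−1} s‖_{I+L} ≤ δ·‖(I + L)^{−1} s‖_{I+L} for some δ with 0 < δ ≤ ε·‖s‖_L/(6·√2·n²), where ‖s‖_L = √(sᵀLs). Then (1 − ε)·sᵀ(I + L)^{−1} L (I + L)^{−1} s ≤ qᵀ L q ≤ (1 + ε)·sᵀ(I + L)^{−1} L (I + L)^{−1} s. -/

import Mathlib

open Matrix

/-- The norm of a vector `x` with respect to a matrix `K`: `‖x‖_K = √(xᵀ K x)`. -/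
noncomputable def matNorm {m : Type*} [Fintype m] (K : Matrix m m ℝ) (x : m → ℝ) : ℝ :=
  Real.sqrt (x ⬝ᵥ K *ᵥ x)

section
open scoped MatrixOrder

noncomputable def Matrix.PosSemidef.sqrt {m : Type*} [Fintype m] [DecidableEq m]
    {K : Matrix m m ℝ} (_hK : K.PosSemidef) : Matrix m m ℝ := CFC.sqrt K

lemma Matrix.PosSemidef.sqrt_mul_self {m : Type*} [Fintype m] [DecidableEq m]
    {K : Matrix m m ℝ} (hK : K.PosSemidef) : hK.sqrt * hK.sqrt = K :=
  CFC.sqrt_mul_sqrt_self K hK.nonneg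

lemma Matrix.PosSemidef.posSemidef_sqrt {m : Type*} [Fintype m] [DecidableEq m]
    {K : Matrix m m ℝ} (hK : K.PosSemidef) : hK.sqrt.PosSemidef :=
  (CFC.sqrt_nonneg K).posSemidef

end

variable {n : ℕ}




lemma dot_symm {K : Matrix (Fin n) (Fin n) ℝ} (hK : K.IsSymm) (v w : Fin n → ℝ) :
    v ⬝ᵥ K *ᵥ w = w ⬝ᵥ K *ᵥ v := by
  rw [dotProduct_mulVec]
  conv_lhs => rw [← hK]
  rw [vecMul_transpose, dotProduct_comm]

lemma quad_sqrt {K : Matrix (Fin n) (Fin n) ℝ} (hK : K.PosSemidef) (v w : Fin n → ℝ) :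
    v ⬝ᵥ K *ᵥ w = (hK.sqrt *ᵥ v) ⬝ᵥ (hK.sqrt *ᵥ w) := by
  have hS : hK.sqrt.IsSymm := by
    have h := hK.posSemidef_sqrt.1
    rwa [Matrix.IsHermitian, conjTranspose_eq_transpose_of_trivial] at h
  conv_lhs => rw [← hK.sqrt_mul_self, ← mulVec_mulVec, dotProduct_mulVec]
  conv_lhs => rw [← hS, vecMul_transpose]
  rw [hS]

lemma psd_cs {K : Matrix (Fin n) (Fin n) ℝ} (hK : K.PosSemidef) (v w : Fin n → ℝ) :
    (v ⬝ᵥ K *ᵥ w)^2 ≤ (v ⬝ᵥ K *ᵥ v) * (w ⬝ᵥ K *ᵥ w) := by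
  rw [quad_sqrt hK v w, quad_sqrt hK v v, quad_sqrt hK w w]
  simpa [dotProduct, pow_two] using
    Finset.sum_mul_sq_le_sq_mul_sq Finset.univ (hK.sqrt *ᵥ v) (hK.sqrt *ᵥ w)

lemma psd_nonneg {K : Matrix (Fin n) (Fin n) ℝ} (hK : K.PosSemidef) (v : Fin n → ℝ) :
    0 ≤ v ⬝ᵥ K *ᵥ v := by simpa using hK.dotProduct_mulVec_nonneg v

lemma lap_decomp (A : Matrix (Fin n) (Fin n) ℝ) (hAsymm : A.IsSymm)
    (hAval : ∀ i j, A i j = -1 ∨ A i j = 0 ∨ A i j = 1) (v : Fin n → ℝ) :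
    2 * (v ⬝ᵥ (Matrix.diagonal (fun i => ∑ j, |A i j|) - A) *ᵥ v)
      = ∑ i, ∑ j, |A i j| * (v i - A i j * v j)^2 := by
  have hsym : ∀ i j, A j i = A i j := fun i j => congrFun (congrFun hAsymm i) j
  have per : ∀ i j, |A i j| * (v i - A i j * v j)^2
      = |A i j| * v i^2 + |A i j| * v j^2 - 2*(A i j * (v i * v j)) := by
    intro i j
    rcases hAval i j with h|h|h <;> rw [h] <;> norm_num <;> ring
  have hS2 : ∑ i, ∑ j, |A i j| * v j^2 = ∑ i, (∑ j, |A i j|) * v i^2 := by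
    rw [Finset.sum_comm]
    refine Finset.sum_congr rfl fun j _ => ?_
    rw [Finset.sum_mul]
    exact Finset.sum_congr rfl fun i _ => by rw [hsym]
  have e1 : ∑ i, ∑ j, |A i j| * v i^2 = ∑ i, (∑ j, |A i j|) * v i^2 :=
    Finset.sum_congr rfl fun i _ => (Finset.sum_mul _ _ _).symm
  have e3 : ∑ i, ∑ j, (2:ℝ)*(A i j * (v i * v j)) = 2 * ∑ i, ∑ j, A i j * (v i * v j) := by
    rw [Finset.mul_sum]
    exact Finset.sum_congr rfl fun i _ => (Finset.mul_sum _ _ _).symm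
  have expand : ∑ i, ∑ j, (|A i j| * v i^2 + |A i j| * v j^2 - 2*(A i j * (v i * v j)))
      = (∑ i, ∑ j, |A i j| * v i^2) + (∑ i, ∑ j, |A i j| * v j^2)
        - ∑ i, ∑ j, (2:ℝ)*(A i j * (v i * v j)) := by
    simp [Finset.sum_add_distrib, Finset.sum_sub_distrib]
  have base : v ⬝ᵥ (Matrix.diagonal (fun i => ∑ j, |A i j|) - A) *ᵥ v
      = (∑ i, (∑ j, |A i j|) * v i^2) - ∑ i, ∑ j, A i j * (v i * v j) := by
    rw [sub_mulVec, dotProduct_sub]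
    congr 1
    · simp only [dotProduct, mulVec_diagonal]
      exact Finset.sum_congr rfl fun i _ => by ring
    · simp only [dotProduct, mulVec, Finset.mul_sum]
      exact Finset.sum_congr rfl fun i _ => Finset.sum_congr rfl fun j _ => by
        ring
  have rhs : ∑ i, ∑ j, |A i j| * (v i - A i j * v j)^2
      = ∑ i, ∑ j, (|A i j| * v i^2 + |A i j| * v j^2 - 2*(A i j * (v i * v j))) :=
    Finset.sum_congr rfl fun i _ => Finset.sum_congr rfl fun j _ => per i j
  rw [rhs, expand, e1, hS2, e3, base]
  ring

lemma sandwich {S P : Matrix (Fin n) (Fin n) ℝ} (hS : S.IsSymm) (v : Fin n → ℝ) :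
    v ⬝ᵥ (S * P * S) *ᵥ v = (S *ᵥ v) ⬝ᵥ P *ᵥ (S *ᵥ v) := by
  rw [← mulVec_mulVec, ← mulVec_mulVec, dotProduct_mulVec]
  conv_lhs => rw [← hS, vecMul_transpose]
  rw [hS]

lemma quad_upper (A : Matrix (Fin n) (Fin n) ℝ) (hAsymm : A.IsSymm)
    (hAval : ∀ i j, A i j = -1 ∨ A i j = 0 ∨ A i j = 1) (v : Fin n → ℝ) :
    v ⬝ᵥ (Matrix.diagonal (fun i => ∑ j, |A i j|) - A) *ᵥ v ≤ 2 * n * (v ⬝ᵥ v) := by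
  have h := lap_decomp A hAsymm hAval v
  have hb : ∑ i, ∑ j, |A i j| * (v i - A i j * v j)^2 ≤ ∑ i, ∑ j, (2*v i^2 + 2*v j^2) := by
    refine Finset.sum_le_sum fun i _ => Finset.sum_le_sum fun j _ => ?_
    rcases hAval i j with hij|hij|hij <;> rw [hij] <;> norm_num <;> nlinarith [sq_nonneg (v i + v j), sq_nonneg (v i - v j)]
  have hc : ∑ i, ∑ j, (2*v i^2 + 2*v j^2) = 4 * n * (v ⬝ᵥ v) := by
    simp [Finset.sum_add_distrib, Finset.sum_const, Finset.card_univ, dotProduct, pow_two,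
      Finset.mul_sum]
    rw [← Finset.sum_add_distrib]
    exact Finset.sum_congr rfl fun i _ => by ring
  linarith [h, hb.trans_eq hc]

lemma lap_nonneg (A : Matrix (Fin n) (Fin n) ℝ) (hAsymm : A.IsSymm)
    (hAval : ∀ i j, A i j = -1 ∨ A i j = 0 ∨ A i j = 1) (v : Fin n → ℝ) :
    0 ≤ v ⬝ᵥ (Matrix.diagonal (fun i => ∑ j, |A i j|) - A) *ᵥ v := by
  have h := lap_decomp A hAsymm hAval v
  have : (0:ℝ) ≤ ∑ i, ∑ j, |A i j| * (v i - A i j * v j)^2 :=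
    Finset.sum_nonneg fun i _ => Finset.sum_nonneg fun j _ =>
      mul_nonneg (abs_nonneg _) (sq_nonneg _)
  linarith

lemma sq_sandwich {S P : Matrix (Fin n) (Fin n) ℝ} (h : S * S = P) :
    P * P = S * P * S := by rw [← h]; simp [mul_assoc]

lemma cube_sandwich {S P : Matrix (Fin n) (Fin n) ℝ} (h : S * S = P) :
    P * P * P = S * (P * P) * S := by rw [← h]; simp [mul_assoc]

lemma quad_sq_le {L : Matrix (Fin n) (Fin n) ℝ} (hL : L.PosSemidef) (c : ℝ)
    (hbound : ∀ v, v ⬝ᵥ L *ᵥ v ≤ c * (v ⬝ᵥ v)) (v : Fin n → ℝ) :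
    v ⬝ᵥ (L*L) *ᵥ v ≤ c * (v ⬝ᵥ L *ᵥ v) := by
  have hS : hL.sqrt.IsSymm := by
    have h := hL.posSemidef_sqrt.1
    rwa [Matrix.IsHermitian, conjTranspose_eq_transpose_of_trivial] at h
  rw [sq_sandwich hL.sqrt_mul_self, sandwich hS, quad_sqrt hL v v]
  exact hbound _

lemma quad_cube_le {L : Matrix (Fin n) (Fin n) ℝ} (hL : L.PosSemidef) (c : ℝ) (hc : 0 ≤ c)
    (hbound : ∀ v, v ⬝ᵥ L *ᵥ v ≤ c * (v ⬝ᵥ v)) (v : Fin n → ℝ) :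
    v ⬝ᵥ (L*L*L) *ᵥ v ≤ c^2 * (v ⬝ᵥ L *ᵥ v) := by
  have hS : hL.sqrt.IsSymm := by
    have h := hL.posSemidef_sqrt.1
    rwa [Matrix.IsHermitian, conjTranspose_eq_transpose_of_trivial] at h
  have h2 : v ⬝ᵥ (L*L) *ᵥ v ≤ c * (v ⬝ᵥ L *ᵥ v) := quad_sq_le hL c hbound v
  have h3 := quad_sq_le hL c hbound (hL.sqrt *ᵥ v)
  rw [cube_sandwich hL.sqrt_mul_self, sandwich hS]
  calc (hL.sqrt *ᵥ v) ⬝ᵥ (L*L) *ᵥ (hL.sqrt *ᵥ v)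
      ≤ c * ((hL.sqrt *ᵥ v) ⬝ᵥ L *ᵥ (hL.sqrt *ᵥ v)) := h3
    _ = c * (v ⬝ᵥ (L*L) *ᵥ v) := by
        rw [sq_sandwich hL.sqrt_mul_self, sandwich hS]
    _ ≤ c * (c * (v ⬝ᵥ L *ᵥ v)) := mul_le_mul_of_nonneg_left h2 hc
    _ = c^2 * (v ⬝ᵥ L *ᵥ v) := by ring

lemma sq_le_one' {t : ℝ} (h1 : -1 ≤ t) (h2 : t ≤ 1) : t*t ≤ 1 := by nlinarith

lemma arith_b2 {a2 u w N b2 : ℝ} (h : b2 = a2 + 2*u + w) (hu : u ≤ 2*N*a2)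
    (hw : w ≤ (2*N)^2*a2) (hN : 1 ≤ N) (ha : 0 ≤ a2) : b2 ≤ 9*N^2*a2 := by
  nlinarith [mul_nonneg (sub_nonneg.mpr hN) ha,
    mul_nonneg (mul_nonneg (sub_nonneg.mpr hN) (sub_nonneg.mpr hN)) ha,
    mul_nonneg (mul_nonneg (sub_nonneg.mpr hN) (by linarith : (0:ℝ) ≤ N)) ha]

lemma arith_pos {a2 b2 N : ℝ} (h : b2 ≤ 9*N^2*a2) (hb : 0 < b2) (hN : 0 < N) :
    0 < a2 := by nlinarith [sq_nonneg N]

lemma arith_xs {xs xx ss : ℝ} (h1 : xs^2 ≤ xx*ss) (h2 : xx ≤ xs) (hxx : 0 ≤ xx)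
    (hss : 0 ≤ ss) : xs ≤ ss := by nlinarith

lemma arith_h72 {δ N ε b2 r w : ℝ} (hδ : 0 < δ) (hN : 1 ≤ N) (hr : r*r = 2)
    (hw : w*w = b2) (hrn : 0 ≤ r) (hwn : 0 ≤ w)
    (h1 : δ * (6*r*N^2) ≤ ε*w) : 72*N^4*δ^2 ≤ ε^2*b2 := by
  have hN0 : (0:ℝ) < N := by linarith
  have h2 := mul_self_le_mul_self (by positivity) h1
  have h3 : δ * (6*r*N^2) * (δ * (6*r*N^2)) = 36*N^4*δ^2*(r*r) := by ring
  have h4 : ε*w*(ε*w) = ε^2*(w*w) := by ring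
  rw [h3, h4, hr, hw] at h2
  linarith

lemma final_arith {ε a2 e2 c N b2 δ : ℝ} (hε : 0 < ε) (hε' : ε < 1/2) (hN : 1 ≤ N)
    (hb2 : 0 < b2) (hb2a2 : b2 ≤ 9*N^2*a2) (ha2nn : 0 ≤ a2)
    (he2nn : 0 ≤ e2) (he2dN : e2 ≤ δ^2*N) (h72 : 72*N^4*δ^2 ≤ ε^2*b2)
    (hcs : c^2 ≤ a2*e2) :
    (1-ε)*a2 ≤ a2 + 2*c + e2 ∧ a2 + 2*c + e2 ≤ (1+ε)*a2 := by
  have hN0 : (0:ℝ) < N := by linarith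
  have ha2pos : 0 < a2 := arith_pos hb2a2 hb2 hN0
  have t1 : 72*N^4*δ^2 ≤ ε^2*(9*N^2*a2) :=
    le_trans h72 (mul_le_mul_of_nonneg_left hb2a2 (sq_nonneg ε))
  have t2 : 8*N^2*δ^2 ≤ ε^2*a2 := by
    have h9 : (0:ℝ) < 9*N^2 := by positivity
    have h3 : 9*N^2*(8*N^2*δ^2) ≤ 9*N^2*(ε^2*a2) := by
      have e : 9*N^2*(8*N^2*δ^2) = 72*N^4*δ^2 := by ring
      rw [e]
      exact le_trans t1 (le_of_eq (by ring))
    exact le_of_mul_le_mul_left h3 h9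
  have he2a2 : e2 ≤ ε^2*a2/8 := by nlinarith [he2dN, t2, sq_nonneg δ, hN, hN0]
  have hc2 : (2*c)^2 ≤ (ε*a2)^2/2 := by nlinarith [hcs, he2a2, ha2pos.le, sq_nonneg ε]
  have hεa2 : (0:ℝ) ≤ ε*a2 := by positivity
  have hcu : 2*c ≤ 3/4*(ε*a2) := by
    nlinarith [hc2, hεa2, sq_nonneg (2*c - 3/4*(ε*a2))]
  have hcl : -(2*c) ≤ 3/4*(ε*a2) := by
    nlinarith [hc2, hεa2, sq_nonneg (2*c + 3/4*(ε*a2))]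
  have he216 : e2 ≤ ε*a2/16 := by nlinarith [he2a2, ha2pos.le, hε, hε']
  constructor
  · linarith [hcl, he2nn, hεa2]
  · linarith [hcu, he216, hεa2]

theorem stmt_14 (n : ℕ) (hn : 1 ≤ n) (A : Matrix (Fin n) (Fin n) ℝ)
    (hAsymm : A.IsSymm) (hAdiag : ∀ i, A i i = 0)
    (hAval : ∀ i j, A i j = -1 ∨ A i j = 0 ∨ A i j = 1)
    (D L : Matrix (Fin n) (Fin n) ℝ)
    (hD : D = Matrix.diagonal fun i => ∑ j, |A i j|)
    (hL : L = D - A)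
    (s : Fin n → ℝ) (hs : ∀ i, s i ∈ Set.Icc (-1 : ℝ) 1)
    (hsL : 0 < s ⬝ᵥ L *ᵥ s)
    (ε : ℝ) (hε : 0 < ε) (hε' : ε < 1 / 2)
    (δ : ℝ) (hδ : 0 < δ)
    (hδ' : δ ≤ ε * Real.sqrt (s ⬝ᵥ L *ᵥ s) / (6 * Real.sqrt 2 * (n : ℝ) ^ 2))
    (q : Fin n → ℝ)
    (hq : matNorm (1 + L) (q - (1 + L)⁻¹ *ᵥ s) ≤
      δ * matNorm (1 + L) ((1 + L)⁻¹ *ᵥ s)) :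
    (1 - ε) * (s ⬝ᵥ ((1 + L)⁻¹ * L * (1 + L)⁻¹) *ᵥ s) ≤ q ⬝ᵥ L *ᵥ q ∧
    q ⬝ᵥ L *ᵥ q ≤ (1 + ε) * (s ⬝ᵥ ((1 + L)⁻¹ * L * (1 + L)⁻¹) *ᵥ s) := by
  -- basic structure facts
  have hLval : L = Matrix.diagonal (fun i => ∑ j, |A i j|) - A := by rw [hL, hD]
  have hLsymm : L.IsSymm := by
    rw [hLval, Matrix.IsSymm, transpose_sub, Matrix.diagonal_transpose, hAsymm]
  have hLherm : L.IsHermitian := by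
    rw [Matrix.IsHermitian, conjTranspose_eq_transpose_of_trivial]; exact hLsymm
  have hLnonneg : ∀ v : Fin n → ℝ, 0 ≤ v ⬝ᵥ L *ᵥ v := by
    intro v; rw [hLval]; exact lap_nonneg A hAsymm hAval v
  have hLpsd : L.PosSemidef :=
    Matrix.PosSemidef.of_dotProduct_mulVec_nonneg hLherm fun v => by simpa using hLnonneg v
  set N : ℝ := (n : ℝ) with hN
  have hN1 : (1:ℝ) ≤ N := by rw [hN]; exact_mod_cast hn
  have hN0 : (0:ℝ) < N := lt_of_lt_of_le one_pos hN1
  have hLbound : ∀ v : Fin n → ℝ, v ⬝ᵥ L *ᵥ v ≤ (2*N) * (v ⬝ᵥ v) := by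
    intro v; rw [hLval]
    simpa using quad_upper A hAsymm hAval v
  -- the matrix M = 1 + L
  have h1pd : (1 : Matrix (Fin n) (Fin n) ℝ).PosDef := by
    refine Matrix.PosDef.of_dotProduct_mulVec_pos Matrix.isHermitian_one fun x hx => ?_
    rw [one_mulVec]
    exact Matrix.dotProduct_star_self_pos_iff.mpr hx
  have hMpd : (1 + L).PosDef := h1pd.add_posSemidef hLpsd
  have hdet : IsUnit (1 + L).det := (Matrix.isUnit_iff_isUnit_det _).mp hMpd.isUnit
  have hMsymm : (1 + L).IsSymm := by
    rw [Matrix.IsSymm, transpose_add, transpose_one, hLsymm]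
  have hMinvSymm : ((1 + L)⁻¹).IsSymm := by
    rw [Matrix.IsSymm, Matrix.transpose_nonsing_inv, hMsymm]
  set x : Fin n → ℝ := (1 + L)⁻¹ *ᵥ s with hx
  have hMx : (1 + L) *ᵥ x = s := by
    rw [hx, mulVec_mulVec, Matrix.mul_nonsing_inv _ hdet, one_mulVec]
  -- quadratic form of M
  have hMform : ∀ v : Fin n → ℝ, v ⬝ᵥ (1 + L) *ᵥ v = v ⬝ᵥ v + v ⬝ᵥ L *ᵥ v := by
    intro v; rw [add_mulVec, one_mulVec, dotProduct_add]
  set a2 : ℝ := x ⬝ᵥ L *ᵥ x with ha2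
  set b2 : ℝ := s ⬝ᵥ L *ᵥ s with hb2
  set d : Fin n → ℝ := q - x with hd
  set e2 : ℝ := d ⬝ᵥ L *ᵥ d with he2
  have hgoal : s ⬝ᵥ ((1 + L)⁻¹ * L * (1 + L)⁻¹) *ᵥ s = a2 := sandwich hMinvSymm s
  have ha2nn : (0:ℝ) ≤ a2 := hLnonneg x
  have hs_eq0 : s = x + L *ᵥ x := by rw [← hMx, add_mulVec, one_mulVec]
  clear_value N a2 b2 e2
  clear_value x d
  -- lower bound on a2 : b2 ≤ 9 N² a2
  have hL2 : x ⬝ᵥ (L*L) *ᵥ x ≤ (2*N) * a2 := by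
    rw [ha2]; exact quad_sq_le hLpsd (2*N) hLbound x
  have hL3 : x ⬝ᵥ (L*L*L) *ᵥ x ≤ (2*N)^2 * a2 := by
    rw [ha2]; exact quad_cube_le hLpsd (2*N) (by positivity) hLbound x
  have hvm : L *ᵥ x = x ᵥ* L := by
    conv_rhs => rw [← hLsymm, vecMul_transpose]
  have t1 : x ⬝ᵥ L *ᵥ (L *ᵥ x) = x ⬝ᵥ (L*L) *ᵥ x := by rw [mulVec_mulVec]
  have t2 : (L *ᵥ x) ⬝ᵥ L *ᵥ x = x ⬝ᵥ (L*L) *ᵥ x := by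
    rw [dot_symm hLsymm, mulVec_mulVec]
  have t3 : (L *ᵥ x) ⬝ᵥ L *ᵥ (L *ᵥ x) = x ⬝ᵥ (L*L*L) *ᵥ x := by
    rw [mulVec_mulVec, hvm, ← dotProduct_mulVec, mulVec_mulVec, ← mul_assoc]
  have hb2expand : b2 = a2 + 2 * (x ⬝ᵥ (L*L) *ᵥ x) + x ⬝ᵥ (L*L*L) *ᵥ x := by
    rw [hb2]
    conv_lhs => rw [hs_eq0]
    rw [add_dotProduct, mulVec_add, dotProduct_add, dotProduct_add, t1, t2, t3, ha2]
    ring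
  have hNa : (0:ℝ) ≤ (N-1) * a2 := mul_nonneg (by linarith) ha2nn
  have hNNa : (0:ℝ) ≤ (N-1) * ((N-1) * a2) := mul_nonneg (by linarith) hNa
  have hNa2 : (0:ℝ) ≤ (N-1) * (N * a2) := mul_nonneg (by linarith) (mul_nonneg hN0.le ha2nn)
  have hb2a2 : b2 ≤ 9*N^2*a2 := arith_b2 hb2expand hL2 hL3 hN1 ha2nn
  have ha2pos : 0 < a2 := arith_pos hb2a2 hsL hN0
  -- x ⬝ᵥ M ⬝ᵥ x ≤ N
  have hss : s ⬝ᵥ s ≤ N := by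
    rw [hN]
    calc s ⬝ᵥ s = ∑ i, s i * s i := rfl
      _ ≤ ∑ _i : Fin n, (1:ℝ) := Finset.sum_le_sum fun i _ => sq_le_one' (hs i).1 (hs i).2
      _ = (n:ℝ) := by simp
  have hxs : x ⬝ᵥ s = x ⬝ᵥ x + a2 := by
    conv_lhs => rw [hs_eq0]
    rw [dotProduct_add, ha2]
  have hCS : (x ⬝ᵥ s)^2 ≤ (x ⬝ᵥ x) * (s ⬝ᵥ s) := by
    simpa [dotProduct, pow_two] using Finset.sum_mul_sq_le_sq_mul_sq Finset.univ x s
  have hxx : (0:ℝ) ≤ x ⬝ᵥ x := Finset.sum_nonneg fun i _ => mul_self_nonneg _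
  have hssnn : (0:ℝ) ≤ s ⬝ᵥ s := Finset.sum_nonneg fun i _ => mul_self_nonneg _
  have hxs_le : x ⬝ᵥ s ≤ s ⬝ᵥ s :=
    arith_xs hCS (by rw [hxs]; exact le_add_of_nonneg_right ha2nn) hxx hssnn
  have hxMx : x ⬝ᵥ (1 + L) *ᵥ x ≤ N := by
    rw [hMx]; exact le_trans hxs_le hss
  have hxMxnn : (0:ℝ) ≤ x ⬝ᵥ (1 + L) *ᵥ x := by
    rw [hMform x, ← ha2]
    exact add_nonneg hxx ha2nn
  have hdd : (0:ℝ) ≤ d ⬝ᵥ d := Finset.sum_nonneg fun i _ => mul_self_nonneg _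
  have he2nn : (0:ℝ) ≤ e2 := by rw [he2]; exact hLnonneg d
  have hdMdnn : (0:ℝ) ≤ d ⬝ᵥ (1 + L) *ᵥ d := by
    rw [hMform d, ← he2]
    exact add_nonneg hdd he2nn
  -- process hq
  have hq2 : d ⬝ᵥ (1 + L) *ᵥ d ≤ δ^2 * (x ⬝ᵥ (1 + L) *ᵥ x) := by
    have h := mul_self_le_mul_self (Real.sqrt_nonneg _) hq
    simp only [matNorm] at h
    rw [Real.mul_self_sqrt hdMdnn] at h
    calc d ⬝ᵥ (1 + L) *ᵥ d
        ≤ δ * Real.sqrt (x ⬝ᵥ (1 + L) *ᵥ x) * (δ * Real.sqrt (x ⬝ᵥ (1 + L) *ᵥ x)) := h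
      _ = δ^2 * (Real.sqrt (x ⬝ᵥ (1 + L) *ᵥ x) * Real.sqrt (x ⬝ᵥ (1 + L) *ᵥ x)) := by ring
      _ = δ^2 * (x ⬝ᵥ (1 + L) *ᵥ x) := by rw [Real.mul_self_sqrt hxMxnn]
  have h1e : e2 ≤ d ⬝ᵥ (1 + L) *ᵥ d := by
    rw [hMform d, ← he2]
    exact le_add_of_nonneg_left hdd
  have he2dN : e2 ≤ δ^2 * N :=
    le_trans (h1e.trans hq2) (mul_le_mul_of_nonneg_left hxMx (sq_nonneg δ))
  -- bound on δ²
  have hden : (0:ℝ) < 6 * Real.sqrt 2 * N^2 := by positivity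
  have h1δ : δ * (6 * Real.sqrt 2 * N^2) ≤ ε * Real.sqrt b2 := (le_div_iff₀ hden).mp hδ'
  have h72 : 72 * N^4 * δ^2 ≤ ε^2 * b2 :=
    arith_h72 hδ hN1 (Real.mul_self_sqrt (by norm_num)) (Real.mul_self_sqrt hsL.le)
      (Real.sqrt_nonneg 2) (Real.sqrt_nonneg b2) h1δ
  -- expansion of q ⬝ᵥ L *ᵥ q
  set c : ℝ := x ⬝ᵥ L *ᵥ d with hc
  have hqexp : q ⬝ᵥ L *ᵥ q = a2 + 2*c + e2 := by
    have hqxd : q = x + d := by rw [hd]; abel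
    rw [hqxd, add_dotProduct, mulVec_add, dotProduct_add, dotProduct_add,
      dot_symm hLsymm d x, ha2, ← hc, ← he2]
    ring
  have hcs2 : c^2 ≤ a2 * e2 := by
    rw [hc, ha2, he2]
    exact psd_cs hLpsd x d
  have hfin := final_arith hε hε' hN1 hsL hb2a2 ha2nn he2nn he2dN h72 hcs2
  refine ⟨?_, ?_⟩ <;> rw [hgoal, hqexp]
  · exact hfin.1
  · exact hfin.2
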